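/- Let M be a module over A = k[x_1,…,x_n] equipped with an AV-module structure π, and suppose M is finitely generated as an A-module. Then the torsion submodule of M is zero: for every nonzero f ∈ A and m ∈ M, f·m = 0 implies m = 0. -/

import Mathlib

open MvPolynomial

attribute [local instance] LieRing.ofAssociativeRing

section Aux

variable {k : Type*} [Field k] [CharZero k] {n : ℕ}

lemma coeff_pderiv_aux (f : MvPolynomial (Fin n) k) (i : Fin n) (d : Fin n →₀ ℕ)
    (hd : d i ≠ 0) :
    coeff (d - Finsupp.single i 1) (pderiv i f) = coeff d f * (d i : k) := by
  conv_lhs => rw [f.as_sum, map_sum]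
  simp only [pderiv_monomial]
  rw [MvPolynomial.coeff_sum]
  rw [Finset.sum_eq_single d]
  · rw [coeff_monomial, if_pos rfl]
  · intro s hs hsd
    rw [coeff_monomial]
    split_ifs with h
    · by_cases hsi : s i = 0
      · simp [hsi]
      · exfalso
        apply hsd
        ext j
        have hj := DFunLike.congr_fun h j
        simp only [Finsupp.tsub_apply, Finsupp.single_apply] at hj
        rcases eq_or_ne j i with rfl | hji
        · simp at hj; omega
        · simpa [Ne.symm hji] using hj
    · rfl
  · intro hdns
    rw [MvPolynomial.notMem_support_iff] at hdns
    simp [hdns]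

lemma exists_pderiv_lt {f : MvPolynomial (Fin n) k} (hf : f ≠ 0)
    (hdeg : f.totalDegree ≠ 0) :
    ∃ i, pderiv i f ≠ 0 ∧ (pderiv i f).totalDegree < f.totalDegree := by
  obtain ⟨d, hdsup, hdeq⟩ := f.support.exists_mem_eq_sup
    (Finsupp.support_nonempty_iff.mpr (by simpa using hf))
    (fun m : Fin n →₀ ℕ => m.sum fun _ e => e)
  have hdsum : (d.sum fun _ e => e) = f.totalDegree := by
    rw [totalDegree, hdeq]
  have hd0 : d ≠ 0 := by
    rintro rfl; simp [Finsupp.sum] at hdsum; omega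
  obtain ⟨i, hi⟩ := Finsupp.support_nonempty_iff.mpr hd0
  have hdi : d i ≠ 0 := Finsupp.mem_support_iff.mp hi
  refine ⟨i, ?_, ?_⟩
  · intro h
    have := coeff_pderiv_aux f i d hdi
    rw [h] at this
    simp only [coeff_zero] at this
    have hcd : coeff d f ≠ 0 := MvPolynomial.mem_support_iff.mp hdsup
    have : coeff d f * (d i : k) = 0 := this.symm
    rcases mul_eq_zero.mp this with h' | h'
    · exact hcd h'
    · exact hdi (Nat.cast_eq_zero.mp h')
  · have hb : (pderiv i f).totalDegree ≤ f.totalDegree - 1 := by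
      have hrepr : pderiv i f =
          ∑ s ∈ f.support, monomial (s - Finsupp.single i 1) (coeff s f * (s i : k)) := by
        conv_lhs => rw [f.as_sum, map_sum]
        simp only [pderiv_monomial]
      rw [hrepr]
      refine (totalDegree_finset_sum _ _).trans (Finset.sup_le fun s hs => ?_)
      by_cases hsi : s i = 0
      · simp [hsi]
      · refine (totalDegree_monomial_le _ _).trans ?_
        show ((s - Finsupp.single i 1).sum fun _ e => e) ≤ f.totalDegree - 1
        have hle : Finsupp.single i 1 ≤ s := by
          rw [Finsupp.single_le_iff]; omega
        have hadd : (s - Finsupp.single i 1) + Finsupp.single i 1 = s :=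
          tsub_add_cancel_of_le hle
        have hsum : ((s - Finsupp.single i 1) + Finsupp.single i 1).sum (fun _ e => e)
            = ((s - Finsupp.single i 1).sum fun _ e => e) + 1 := by
          rw [Finsupp.sum_add_index' (fun _ => rfl) (fun _ _ _ => rfl)]
          simp [Finsupp.sum_single_index]
        rw [hadd] at hsum
        have hsle : (s.sum fun _ e => e) ≤ f.totalDegree := le_totalDegree hs
        omega
    omega

lemma ideal_pderiv_stable_eq_top (I : Ideal (MvPolynomial (Fin n) k)) (hne : I ≠ ⊥)
    (hst : ∀ i : Fin n, ∀ f ∈ I, pderiv i f ∈ I) : I = ⊤ := by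
  obtain ⟨f, hfI, hf0⟩ := Submodule.exists_mem_ne_zero_of_ne_bot hne
  -- strong induction on total degree
  suffices H : ∀ D : ℕ, ∀ g ∈ I, g ≠ 0 → g.totalDegree ≤ D → I = ⊤ from
    H f.totalDegree f hfI hf0 le_rfl
  intro D
  induction D with
  | zero =>
    intro g hgI hg0 hdeg
    have hdeg0 : g.totalDegree = 0 := Nat.le_zero.mp hdeg
    -- g is a nonzero constant, hence a unit
    have hC : g = C (coeff 0 g) := by
      ext d
      rcases eq_or_ne d 0 with rfl | hd
      · simp
      · rw [coeff_C, if_neg (Ne.symm hd)]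
        by_contra hcd
        have hds := MvPolynomial.mem_support_iff.mpr hcd
        have := (totalDegree_eq_zero_iff _ g).mp hdeg0 d hds
        exact hd (Finsupp.ext this)
    have hc0 : coeff 0 g ≠ 0 := fun h => hg0 (by rw [hC, h, map_zero])
    refine Ideal.eq_top_of_isUnit_mem I hgI ?_
    rw [hC]
    exact (isUnit_iff_ne_zero.mpr hc0).map (C : k →+* MvPolynomial (Fin n) k)
  | succ D ih =>
    intro g hgI hg0 hdeg
    rcases eq_or_ne g.totalDegree 0 with h0 | h0
    · exact ih g hgI hg0 (by omega)
    · obtain ⟨i, hne', hlt⟩ := exists_pderiv_lt hg0 h0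
      exact ih (pderiv i g) (hst i g hgI) hne' (by omega)

end Aux

/-- Let `M` be an `AV`-module over `A = k[x_1, …, x_n]` which is finitely
generated as an `A`-module.  Then the torsion submodule of `M` is zero: for every nonzero
`f ∈ A` and `m ∈ M`, `f • m = 0` implies `m = 0`. -/
theorem av_module_torsion_free_affine_space
    (k : Type*) [Field k] [IsAlgClosed k] [CharZero k] (n : ℕ)
    (M : Type*) [AddCommGroup M] [Module k M]
    [Module (MvPolynomial (Fin n) k) M] [IsScalarTower k (MvPolynomial (Fin n) k) M]
    (π : Derivation k (MvPolynomial (Fin n) k) (MvPolynomial (Fin n) k)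
        →ₗ⁅k⁆ Module.End k M)
    (hLeibniz : ∀ (η : Derivation k (MvPolynomial (Fin n) k) (MvPolynomial (Fin n) k))
        (f : MvPolynomial (Fin n) k) (m : M),
        π η (f • m) = f • (π η m) + (η f) • m)
    [Module.Finite (MvPolynomial (Fin n) k) M] :
    ∀ (f : MvPolynomial (Fin n) k) (m : M), f ≠ 0 → f • m = 0 → m = 0 := by
  set A := MvPolynomial (Fin n) k with hA
  set T : Submodule A M := Submodule.torsion A M with hT
  -- T is stable under all π η
  have hstable : ∀ (η : Derivation k A A), ∀ t ∈ T, π η t ∈ T := by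
    intro η t ht
    obtain ⟨a, ha⟩ := (Submodule.mem_torsion_iff t).mp ht
    rw [Submonoid.smul_def] at ha
    refine (Submodule.mem_torsion_iff _).mpr ⟨⟨(a : A) ^ 2, pow_mem a.2 2⟩, ?_⟩
    rw [Submonoid.smul_def]
    have h1 : π η ((a : A) • t) = (a : A) • (π η t) + (η (a : A)) • t := hLeibniz η _ t
    rw [ha, map_zero] at h1
    have h2 : (a : A) • ((0 : M)) = 0 := smul_zero _
    calc ((a : A) ^ 2) • π η t = (a : A) • ((a : A) • π η t) := by rw [sq, mul_smul]
      _ = (a : A) • (-((η (a : A)) • t)) := by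
          congr 1
          have := h1.symm
          linear_combination (norm := module) this
      _ = -((η (a : A)) • ((a : A) • t)) := by rw [smul_neg, smul_comm]
      _ = 0 := by rw [ha, smul_zero, neg_zero]
  -- the annihilator of T is nonzero
  haveI : IsNoetherian A M := isNoetherian_of_isNoetherianRing_of_finite A M
  haveI : Module.Finite A T := Module.Finite.iff_fg.mpr (IsNoetherian.noetherian T)
  have htor : Module.IsTorsion A T := Submodule.torsion_isTorsion
  have hann := Submodule.annihilator_top_inter_nonZeroDivisors (R := A) (M := T) htor
  obtain ⟨g, hg1, hg2⟩ := hann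
  have hgT : ∀ t ∈ T, g • t = 0 := by
    intro t ht
    have := Submodule.mem_annihilator.mp hg1 ⟨t, ht⟩ Submodule.mem_top
    exact congrArg Subtype.val this
  -- the annihilator ideal
  set J : Ideal A := T.annihilator with hJ
  have hgJ : g ∈ J := Submodule.mem_annihilator.mpr hgT
  have hJne : J ≠ ⊥ := fun h => nonZeroDivisors.ne_zero hg2 (by rw [h] at hgJ; exact hgJ)
  have hJst : ∀ i : Fin n, ∀ f ∈ J, pderiv i f ∈ J := by
    intro i f hf
    refine Submodule.mem_annihilator.mpr fun t ht => ?_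
    have hft : f • t = 0 := Submodule.mem_annihilator.mp hf t ht
    have h1 := hLeibniz (pderiv i) f t
    rw [hft, map_zero] at h1
    have h2 : f • (π (pderiv i) t) = 0 :=
      Submodule.mem_annihilator.mp hf _ (hstable (pderiv i) t ht)
    have : (pderiv i f) • t = -(f • (π (pderiv i) t)) := by
      linear_combination (norm := module) h1.symm
    rw [this, h2, neg_zero]
  have hJtop : J = ⊤ := ideal_pderiv_stable_eq_top J hJne hJst
  -- conclude
  intro f m hf hfm
  have hmT : m ∈ T := (Submodule.mem_torsion_iff m).mpr
    ⟨⟨f, mem_nonZeroDivisors_of_ne_zero hf⟩, by rwa [Submonoid.smul_def]⟩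
  have h1J : (1 : A) ∈ J := hJtop ▸ Submodule.mem_top
  have := Submodule.mem_annihilator.mp h1J m hmT
  rwa [one_smul] at this
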